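/- Suppose S ∈ ℚ⟦X⟧ is a formal power series with constant coefficient 1 satisfying the algebraic equation 2X·S² − (1+X)·S + 1 = 0 (so S is the generating function (1 + z − √(1 − 6z + z²))/(4z) of the super-Catalan / little Schröder numbers, with coefficients s(0)=1, s(1)=1, s(2)=3, s(3)=11, s(4)=45, …). Then the coefficients s(n) of S satisfy, for every n ≥ 2, (n+1)·s(n) = 3·(2n−1)·s(n−1) − (n−2)·s(n−2). -/

import Mathlib

open PowerSeries

/-- The coefficients `s(n)` of the generating function `S` of the super-Catalan
(little Schröder) numbers — the power series with constant term 1 satisfying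
`2X·S² - (1+X)·S + 1 = 0` — satisfy `(n+1)·s(n) = 3(2n-1)·s(n-1) - (n-2)·s(n-2)`
for `n ≥ 2`. -/
theorem stmt17 (S : PowerSeries ℚ) (h1 : PowerSeries.constantCoeff S = 1)
    (hS : 2 * PowerSeries.X * S ^ 2 - (1 + PowerSeries.X) * S + 1 = 0)
    (s : ℕ → ℚ) (hs : ∀ n : ℕ, s n = PowerSeries.coeff n S) :
    ∀ n : ℕ, 2 ≤ n →
      ((n : ℚ) + 1) * s n =
        3 * (2 * (n : ℚ) - 1) * s (n - 1) - ((n : ℚ) - 2) * s (n - 2) := by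
  have hD2 : (d⁄dX ℚ) (2 : ℚ⟦X⟧) = 0 := by
    rw [show ((2 : ℚ⟦X⟧)) = ((2 : ℕ) : ℚ⟦X⟧) by norm_cast]
    exact Derivation.map_natCast (d⁄dX ℚ) 2
  have hS' : 2 * S ^ 2 + 4 * X * S * ((d⁄dX ℚ) S) - S - (1 + X) * ((d⁄dX ℚ) S) = 0 := by
    have e1 : (d⁄dX ℚ) (2 * X * S ^ 2 - (1 + X) * S + 1) = 0 := by rw [hS]; simp
    simp only [map_sub, map_add, Derivation.leibniz, Derivation.leibniz_pow,
      Derivation.map_one_eq_zero, derivative_X, smul_eq_mul, hD2, nsmul_eq_mul,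
      pow_one, Nat.cast_ofNat, mul_zero, mul_one, add_zero, zero_add] at e1
    norm_num at e1
    linear_combination e1
  have key : (1 - 3 * X) * S + (X - 6 * X ^ 2 + X ^ 3) * ((d⁄dX ℚ) S) - (1 - X) = 0 := by
    have hu : (4 * X * S - 1 - X) *
        ((1 - 3 * X) * S + (X - 6 * X ^ 2 + X ^ 3) * ((d⁄dX ℚ) S) - (1 - X)) =
        (1 - X ^ 2) * (2 * X * S ^ 2 - (1 + X) * S + 1) +
        (X - 6 * X ^ 2 + X ^ 3) *
          (2 * S ^ 2 + 4 * X * S * ((d⁄dX ℚ) S) - S - (1 + X) * ((d⁄dX ℚ) S)) := by ring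
    rw [hS, hS'] at hu
    simp only [mul_zero, zero_add, add_zero] at hu
    rcases mul_eq_zero.1 hu with h | h
    · exfalso
      have := congrArg (constantCoeff) h
      simp [h1] at this
    · exact h
  have h3 : (C (R := ℚ)) 3 = 3 := map_ofNat _ 3
  have h6 : (C (R := ℚ)) 6 = 6 := map_ofNat _ 6
  have key2 : S + X * (d⁄dX ℚ) S + X ^ 2 * (X * (d⁄dX ℚ) S) + X =
      1 + X * (C (R := ℚ) 3 * S) + X ^ 2 * (C (R := ℚ) 6 * (d⁄dX ℚ) S) := by
    rw [h3, h6]; linear_combination key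
  have hx : ∀ m : ℕ, (coeff m) (X * (d⁄dX ℚ) S) = (m : ℚ) * coeff m S := by
    intro m
    cases m with
    | zero => simp [coeff_zero_X_mul]
    | succ k =>
      rw [coeff_succ_X_mul, coeff_derivative]
      push_cast; ring
  intro n hn
  obtain ⟨m, rfl⟩ : ∃ m, n = m + 2 := ⟨n - 2, by omega⟩
  have hc := congrArg (coeff (m + 2)) key2
  simp only [map_add] at hc
  rw [show m + 2 = m + 1 + 1 from rfl, coeff_succ_X_mul, coeff_succ_X_mul,
    show m + 1 + 1 = m + 2 from rfl, coeff_X_pow_mul, coeff_X_pow_mul, hx,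
    coeff_C_mul, coeff_C_mul, coeff_derivative, coeff_derivative,
    coeff_one, coeff_X] at hc
  rw [show m + 2 - 1 = m + 1 from rfl, show m + 2 - 2 = m from rfl, hs, hs, hs]
  norm_num at hc
  push_cast
  push_cast at hc
  linear_combination hc
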